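/- Let 𝒳 and 𝒴 be finite nonempty sets, let q be a pmf on 𝒳 × 𝒴, let N ≥ 1, and let p̃ be any pmf on (𝒳 × 𝒴)^N. Let (X^{1:N}, Y^{1:N}) be distributed according to p̃ and let T_{X^{1:N} Y^{1:N}} be the joint histogram of the N pairs. Then for every ε > 0, P_{p̃}[ V( q, T_{X^{1:N} Y^{1:N}} ) > ε ] ≤ V( p̃, q^{⊗N} ) + 2 |𝒳| |𝒴| exp( − N ε² / (2 |𝒳|² |𝒴|²) ), where q^{⊗N} is the N-fold product of q. (Abstract form of Lemma 7 of the paper.) -/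

import Mathlib

open scoped ENNReal BigOperators

attribute [local instance] Classical.propDecidable

/-- A probability mass function on a finite set. -/
def IsPMF {α : Type*} [Fintype α] (p : α → ℝ) : Prop :=
  (∀ x, 0 ≤ p x) ∧ ∑ x, p x = 1

/-- Variational distance between two pmfs. -/
noncomputable def varDist {α : Type*} [Fintype α] (p q : α → ℝ) : ℝ :=
  ∑ x, |p x - q x|

/-- Joint histogram (empirical distribution) of `N` samples. -/
noncomputable def empDist {α : Type*} [Fintype α] [DecidableEq α] {N : ℕ}
    (ω : Fin N → α) : α → ℝ :=
  fun a => (N : ℝ)⁻¹ * ∑ j, (if ω j = a then (1 : ℝ) else 0)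

/-- Joint histogram (empirical distribution) of `kN` samples arranged in `k`
blocks of `N`. -/
noncomputable def empDistBlocks {α : Type*} [Fintype α] [DecidableEq α] {k N : ℕ}
    (ω : Fin k → Fin N → α) : α → ℝ :=
  fun a => ((k * N : ℕ) : ℝ)⁻¹ * ∑ j : Fin k, ∑ i : Fin N, (if ω j i = a then (1 : ℝ) else 0)

lemma exp_mul_le_cosh_add {t y : ℝ} (hy : |y| ≤ 1) :
    Real.exp (t * y) ≤ Real.cosh t + y * Real.sinh t := by
  have h1 : -1 ≤ y := neg_le_of_abs_le hy
  have h2 : y ≤ 1 := le_of_abs_le hy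
  have key := convexOn_exp.2 (Set.mem_univ (-t)) (Set.mem_univ t)
      (by linarith : (0:ℝ) ≤ (1 - y)/2) (by linarith : (0:ℝ) ≤ (1 + y)/2) (by ring)
  simp only [smul_eq_mul] at key
  have e1 : (1 - y)/2 * (-t) + (1 + y)/2 * t = t * y := by ring
  rw [e1] at key
  calc Real.exp (t*y) ≤ (1-y)/2 * Real.exp (-t) + (1+y)/2 * Real.exp t := key
  _ = Real.cosh t + y * Real.sinh t := by rw [Real.cosh_eq, Real.sinh_eq]; ring

lemma mgf_le' {α : Type*} [Fintype α] {q : α → ℝ} (hq : IsPMF q)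
    {Y : α → ℝ} (hY : ∀ x, |Y x| ≤ 1) (hm : ∑ x, q x * Y x = 0) (t : ℝ) :
    ∑ x, q x * Real.exp (t * Y x) ≤ Real.exp (t ^ 2 / 2) := by
  calc ∑ x, q x * Real.exp (t * Y x)
      ≤ ∑ x, q x * (Real.cosh t + Y x * Real.sinh t) :=
        Finset.sum_le_sum fun x _ => mul_le_mul_of_nonneg_left (exp_mul_le_cosh_add (hY x)) (hq.1 x)
    _ = (∑ x, q x) * Real.cosh t + (∑ x, q x * Y x) * Real.sinh t := by
        rw [Finset.sum_mul, Finset.sum_mul, ← Finset.sum_add_distrib]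
        exact Finset.sum_congr rfl fun x _ => by ring
    _ = Real.cosh t := by rw [hq.2, hm]; ring
    _ ≤ Real.exp (t^2/2) := Real.cosh_le_exp_half_sq t

lemma chernoff' {α : Type*} [Fintype α] {q : α → ℝ} (hq : IsPMF q)
    {Y : α → ℝ} (hY : ∀ x, |Y x| ≤ 1) (hm : ∑ x, q x * Y x = 0)
    {N : ℕ} {δ : ℝ} (hδ : 0 < δ) :
    ∑ ω : Fin N → α, (∏ j, q (ω j)) * (if (N : ℝ) * δ < ∑ j, Y (ω j) then (1:ℝ) else 0)
      ≤ Real.exp (-(N * δ ^ 2) / 2) := by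
  have hq0 : ∀ ω : Fin N → α, 0 ≤ ∏ j, q (ω j) := fun ω => Finset.prod_nonneg fun j _ => hq.1 _
  have step1 : ∀ ω : Fin N → α,
      (∏ j, q (ω j)) * (if (N : ℝ) * δ < ∑ j, Y (ω j) then (1:ℝ) else 0)
        ≤ Real.exp (-(N:ℝ) * δ^2) * ∏ j, (q (ω j) * Real.exp (δ * Y (ω j))) := by
    intro ω
    have hind : (if (N : ℝ) * δ < ∑ j, Y (ω j) then (1:ℝ) else 0)
        ≤ Real.exp (δ * (∑ j, Y (ω j)) - (N:ℝ) * δ^2) := by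
      split
      · apply Real.one_le_exp; nlinarith [‹(N : ℝ) * δ < ∑ j, Y (ω j)›]
      · positivity
    calc (∏ j, q (ω j)) * (if (N : ℝ) * δ < ∑ j, Y (ω j) then (1:ℝ) else 0)
        ≤ (∏ j, q (ω j)) * Real.exp (δ * (∑ j, Y (ω j)) - (N:ℝ) * δ^2) :=
          mul_le_mul_of_nonneg_left hind (hq0 ω)
      _ = Real.exp (-(N:ℝ) * δ^2) * ∏ j, (q (ω j) * Real.exp (δ * Y (ω j))) := by
          have e : δ * (∑ j, Y (ω j)) - (N:ℝ)*δ^2 = (-(N:ℝ)*δ^2) + ∑ j, δ * Y (ω j) := by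
            rw [Finset.mul_sum]; ring
          rw [e, Real.exp_add, Real.exp_sum, Finset.prod_mul_distrib]; ring
  have hsum : ∑ ω : Fin N → α, ∏ j, (q (ω j) * Real.exp (δ * Y (ω j)))
      = (∑ x, q x * Real.exp (δ * Y x)) ^ N := by
    rw [← Fintype.piFinset_univ,
      show (∑ x, q x * Real.exp (δ * Y x)) ^ N = ∏ _j : Fin N, ∑ x, q x * Real.exp (δ * Y x) by
        simp [Finset.prod_const], Finset.prod_univ_sum]
  have hbase : (0:ℝ) ≤ ∑ x, q x * Real.exp (δ * Y x) :=
    Finset.sum_nonneg fun x _ => mul_nonneg (hq.1 x) (Real.exp_nonneg _)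
  calc ∑ ω : Fin N → α, (∏ j, q (ω j)) * (if (N : ℝ) * δ < ∑ j, Y (ω j) then (1:ℝ) else 0)
      ≤ ∑ ω : Fin N → α, Real.exp (-(N:ℝ)*δ^2) * ∏ j, (q (ω j) * Real.exp (δ * Y (ω j))) :=
        Finset.sum_le_sum fun ω _ => step1 ω
    _ = Real.exp (-(N:ℝ)*δ^2) * (∑ x, q x * Real.exp (δ * Y x)) ^ N := by
        rw [← Finset.mul_sum, hsum]
    _ ≤ Real.exp (-(N:ℝ)*δ^2) * Real.exp (δ^2/2) ^ N := by
        apply mul_le_mul_of_nonneg_left _ (Real.exp_nonneg _)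
        exact pow_le_pow_left₀ hbase (mgf_le' hq hY hm δ) N
    _ = Real.exp (-(N * δ ^ 2) / 2) := by
        rw [← Real.exp_nat_mul, ← Real.exp_add]
        congr 1; ring

/-- Abstract form of Lemma 7: for any pmf `p̃` on `(𝒳 × 𝒴)^N`,
`P_{p̃}[ V(q, T) > ε ] ≤ V(p̃, q^{⊗N}) + 2|𝒳||𝒴| exp(−Nε²/(2|𝒳|²|𝒴|²))`. -/
theorem empirical_coordination_block
    {𝒳 𝒴 : Type*} [Fintype 𝒳] [Fintype 𝒴] [Nonempty 𝒳] [Nonempty 𝒴]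
    [DecidableEq 𝒳] [DecidableEq 𝒴] {N : ℕ} (hN : 1 ≤ N)
    (q : 𝒳 × 𝒴 → ℝ) (hq : IsPMF q)
    (ptilde : (Fin N → 𝒳 × 𝒴) → ℝ) (hptilde : IsPMF ptilde)
    (ε : ℝ) (hε : 0 < ε) :
    (∑ ω : Fin N → 𝒳 × 𝒴,
        if ε < varDist q (empDist ω) then ptilde ω else 0) ≤
      varDist ptilde (fun ω => ∏ j, q (ω j)) +
        2 * (Fintype.card 𝒳 : ℝ) * (Fintype.card 𝒴 : ℝ) *
          Real.exp (-(N * ε ^ 2) /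
            (2 * (Fintype.card 𝒳 : ℝ) ^ 2 * (Fintype.card 𝒴 : ℝ) ^ 2)) := by
  classical
  set Kx := (Fintype.card 𝒳 : ℝ) with hKxdef
  set Ky := (Fintype.card 𝒴 : ℝ) with hKydef
  have hKx : 0 < Kx := by
    rw [hKxdef]; exact_mod_cast (Fintype.card_pos (α := 𝒳))
  have hKy : 0 < Ky := by
    rw [hKydef]; exact_mod_cast (Fintype.card_pos (α := 𝒴))
  have hK : 0 < Kx * Ky := mul_pos hKx hKy
  set δ : ℝ := ε / (Kx * Ky) with hδdef
  have hδ : 0 < δ := div_pos hε hK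
  set qN : (Fin N → 𝒳 × 𝒴) → ℝ := fun ω => ∏ j, q (ω j) with hqNdef
  have hqN0 : ∀ ω, 0 ≤ qN ω := fun ω => Finset.prod_nonneg fun j _ => hq.1 _
  have hNpos : (0:ℝ) < (N:ℝ) := by exact_mod_cast hN
  set Y : (𝒳 × 𝒴) → (𝒳 × 𝒴) → ℝ := fun a x => (if x = a then 1 else 0) - q a with hYdef
  have hqle1 : ∀ a, q a ≤ 1 :=
    fun a => hq.2 ▸ Finset.single_le_sum (fun x _ => hq.1 x) (Finset.mem_univ a)
  have hYabs : ∀ a x, |Y a x| ≤ 1 := by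
    intro a x
    have h1 := hq.1 a; have h2 := hqle1 a
    simp only [hYdef]; rw [abs_le]
    split_ifs <;> constructor <;> linarith
  have hYmean : ∀ a, ∑ x, q x * Y a x = 0 := by
    intro a
    simp only [hYdef, mul_sub, mul_ite, mul_one, mul_zero]
    rw [Finset.sum_sub_distrib, Finset.sum_ite_eq' Finset.univ a q, ← Finset.sum_mul, hq.2]
    simp
  -- Step A: change of measure
  have stepA : (∑ ω : Fin N → 𝒳 × 𝒴, if ε < varDist q (empDist ω) then ptilde ω else 0)
      ≤ varDist ptilde qN +
        ∑ ω : Fin N → 𝒳 × 𝒴, qN ω * (if ε < varDist q (empDist ω) then (1:ℝ) else 0) := by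
    rw [varDist, ← Finset.sum_add_distrib]
    apply Finset.sum_le_sum
    intro ω _
    have h1 := le_abs_self (ptilde ω - qN ω)
    have h2 := abs_nonneg (ptilde ω - qN ω)
    have h3 := hqN0 ω
    split_ifs <;> nlinarith
  -- empirical sums
  have hsumY : ∀ (ω : Fin N → 𝒳 × 𝒴) a, ∑ j, Y a (ω j) = (N:ℝ) * (empDist ω a - q a) := by
    intro ω a
    have hNne : (N:ℝ) ≠ 0 := ne_of_gt hNpos
    simp only [hYdef, empDist]
    rw [Finset.sum_sub_distrib, Finset.sum_const, Finset.card_univ, Fintype.card_fin,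
      nsmul_eq_mul]
    field_simp
  -- pointwise union bound
  have pointwise : ∀ ω : Fin N → 𝒳 × 𝒴,
      (if ε < varDist q (empDist ω) then (1:ℝ) else 0) ≤
        ∑ a : 𝒳 × 𝒴, ((if (N:ℝ) * δ < ∑ j, Y a (ω j) then (1:ℝ) else 0)
          + (if (N:ℝ) * δ < ∑ j, -Y a (ω j) then (1:ℝ) else 0)) := by
    intro ω
    have hterm0 : ∀ a : 𝒳 × 𝒴, (0:ℝ) ≤ (if (N:ℝ) * δ < ∑ j, Y a (ω j) then (1:ℝ) else 0)
        + (if (N:ℝ) * δ < ∑ j, -Y a (ω j) then (1:ℝ) else 0) := by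
      intro a; positivity
    split_ifs with h
    · have hexists : ∃ a, δ < |q a - empDist ω a| := by
        by_contra hc
        push_neg at hc
        have hb : varDist q (empDist ω) ≤ (Kx * Ky) * δ := by
          rw [varDist]
          calc ∑ a : 𝒳 × 𝒴, |q a - empDist ω a| ≤ ∑ _a : 𝒳 × 𝒴, δ :=
                Finset.sum_le_sum fun a _ => hc a
            _ = (Kx*Ky) * δ := by
                rw [Finset.sum_const, Finset.card_univ, Fintype.card_prod, nsmul_eq_mul]
                push_cast [hKxdef, hKydef]; ring
        have he : (Kx*Ky) * δ = ε := by
          rw [hδdef]; field_simp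
        linarith
      obtain ⟨a, ha⟩ := hexists
      have key : (1:ℝ) ≤ (if (N:ℝ)*δ < ∑ j, Y a (ω j) then (1:ℝ) else 0)
          + (if (N:ℝ)*δ < ∑ j, -Y a (ω j) then (1:ℝ) else 0) := by
        rcases lt_abs.mp ha with h1 | h1
        · have hlt : (N:ℝ)*δ < ∑ j, -Y a (ω j) := by
            rw [Finset.sum_neg_distrib, hsumY ω a]; nlinarith
          rw [if_pos hlt]; split_ifs <;> linarith
        · have hlt : (N:ℝ)*δ < ∑ j, Y a (ω j) := by
            rw [hsumY ω a]; nlinarith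
          rw [if_pos hlt]; split_ifs <;> linarith
      calc (1:ℝ) ≤ _ := key
        _ ≤ _ := Finset.single_le_sum (fun a _ => hterm0 a) (Finset.mem_univ a)
    · exact Finset.sum_nonneg fun a _ => hterm0 a
  -- Step B: union bound + Chernoff
  have hE : -(((N:ℝ)) * δ ^ 2) / 2 = -((N:ℝ) * ε^2) / (2 * Kx^2 * Ky^2) := by
    rw [hδdef]; field_simp
  have stepB : ∑ ω : Fin N → 𝒳 × 𝒴, qN ω * (if ε < varDist q (empDist ω) then (1:ℝ) else 0)
      ≤ 2 * Kx * Ky * Real.exp (-((N:ℝ) * ε^2) / (2 * Kx^2 * Ky^2)) := by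
    calc ∑ ω : Fin N → 𝒳 × 𝒴, qN ω * (if ε < varDist q (empDist ω) then (1:ℝ) else 0)
        ≤ ∑ ω : Fin N → 𝒳 × 𝒴, qN ω *
            ∑ a : 𝒳 × 𝒴, ((if (N:ℝ) * δ < ∑ j, Y a (ω j) then (1:ℝ) else 0)
              + (if (N:ℝ) * δ < ∑ j, -Y a (ω j) then (1:ℝ) else 0)) :=
          Finset.sum_le_sum fun ω _ => mul_le_mul_of_nonneg_left (pointwise ω) (hqN0 ω)
      _ = ∑ a : 𝒳 × 𝒴,
            ((∑ ω : Fin N → 𝒳 × 𝒴, qN ω * (if (N:ℝ) * δ < ∑ j, Y a (ω j) then (1:ℝ) else 0))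
            + ∑ ω : Fin N → 𝒳 × 𝒴, qN ω * (if (N:ℝ) * δ < ∑ j, -Y a (ω j) then (1:ℝ) else 0)) := by
          simp_rw [Finset.mul_sum, mul_add, Finset.sum_add_distrib]
          congr 1 <;> exact Finset.sum_comm
      _ ≤ ∑ _a : 𝒳 × 𝒴, (Real.exp (-((N:ℝ) * δ^2) / 2) + Real.exp (-((N:ℝ) * δ^2) / 2)) := by
          apply Finset.sum_le_sum
          intro a _
          have c1 := chernoff' hq (hYabs a) (hYmean a) (N := N) hδ
          have c2 : ∑ ω : Fin N → 𝒳 × 𝒴,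
              (∏ j, q (ω j)) * (if (N:ℝ) * δ < ∑ j, -Y a (ω j) then (1:ℝ) else 0)
              ≤ Real.exp (-((N:ℝ) * δ ^ 2) / 2) := by
            have habs : ∀ x, |(-Y a x)| ≤ 1 := fun x => (abs_neg (Y a x)) ▸ hYabs a x
            have hm : ∑ x, q x * (-Y a x) = 0 := by
              simp only [mul_neg, Finset.sum_neg_distrib, hYmean a, neg_zero]
            exact chernoff' hq (Y := fun x => -Y a x) habs hm hδ
          exact add_le_add c1 c2
      _ = 2 * Kx * Ky * Real.exp (-((N:ℝ) * ε^2) / (2 * Kx^2 * Ky^2)) := by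
          rw [Finset.sum_const, Finset.card_univ, Fintype.card_prod, nsmul_eq_mul, hE]
          push_cast [hKxdef, hKydef]; ring
  calc (∑ ω : Fin N → 𝒳 × 𝒴, if ε < varDist q (empDist ω) then ptilde ω else 0)
      ≤ varDist ptilde qN +
          ∑ ω : Fin N → 𝒳 × 𝒴, qN ω * (if ε < varDist q (empDist ω) then (1:ℝ) else 0) := stepA
    _ ≤ varDist ptilde qN + 2 * Kx * Ky * Real.exp (-((N:ℝ) * ε^2) / (2 * Kx^2 * Ky^2)) :=
        add_le_add_right stepB _
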